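/- Suppose |D| < 1 and |A - D| < 2. Then for every β in the open interval (max{-P_0(1), P_0(-1)}, -D^2 + AD - B + 1), where P_0(λ) = λ^3 + Aλ^2 + Bλ + D, the polynomial P_β(λ) = λ^3 + Aλ^2 + (B+β)λ + D is stable (all complex roots have modulus < 1), and for every β outside the closure of this interval P_β has a complex root of modulus ≥ 1. -/

import Mathlib

lemma cubic_ivt (A b D lo hi : ℝ) (hle : lo ≤ hi)
    (h1 : lo^3 + A*lo^2 + b*lo + D ≤ 0) (h2 : 0 ≤ hi^3 + A*hi^2 + b*hi + D) :
    ∃ r, lo ≤ r ∧ r ≤ hi ∧ r^3 + A*r^2 + b*r + D = 0 := by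
  have hc : ContinuousOn (fun x : ℝ => x^3 + A*x^2 + b*x + D) (Set.Icc lo hi) := by
    fun_prop
  obtain ⟨r, hr, hr0⟩ := intermediate_value_Icc hle hc ⟨h1, h2⟩
  exact ⟨r, hr.1, hr.2, hr0⟩

lemma cubic_big_aux (A b D a c d : ℝ) (ha0 : 0 ≤ a) (hc0 : 0 ≤ c) (hd0 : 0 ≤ d)
    (hA : -a ≤ A) (hb : -c ≤ b) (hD : -d ≤ D) :
    0 ≤ (1+a+c+d)^3 + A*(1+a+c+d)^2 + b*(1+a+c+d) + D := by
  have hM0 : (0:ℝ) ≤ 1+a+c+d := by linarith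
  nlinarith [mul_nonneg (mul_nonneg hM0 hM0) (add_nonneg hc0 hd0),
    mul_nonneg hM0 (add_nonneg ha0 hd0), mul_nonneg hM0 hM0, hM0, hA, hb, hD]

lemma cubic_bigM (A b D : ℝ) :
    0 ≤ (1+|A|+|b|+|D|)^3 + A*(1+|A|+|b|+|D|)^2 + b*(1+|A|+|b|+|D|) + D :=
  cubic_big_aux A b D _ _ _ (abs_nonneg A) (abs_nonneg b) (abs_nonneg D)
    (neg_abs_le A) (neg_abs_le b) (neg_abs_le D)

lemma cubic_negM (A b D : ℝ) :
    (-(1+|A|+|b|+|D|))^3 + A*(-(1+|A|+|b|+|D|))^2 + b*(-(1+|A|+|b|+|D|)) + D ≤ 0 := by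
  have h := cubic_big_aux (-A) b (-D) |A| |b| |D| (abs_nonneg A) (abs_nonneg b) (abs_nonneg D)
    (by simpa using neg_abs_le (-A)) (neg_abs_le b) (by simpa using neg_abs_le (-D))
  nlinarith [h]

lemma cubic_root_exists (A b D : ℝ) : ∃ r : ℝ, r^3 + A*r^2 + b*r + D = 0 := by
  have hM1 : (1:ℝ) ≤ 1 + |A| + |b| + |D| := by
    have := abs_nonneg A; have := abs_nonneg b; have := abs_nonneg D; linarith
  obtain ⟨r, _, _, hr⟩ := cubic_ivt A b D (-(1+|A|+|b|+|D|)) (1+|A|+|b|+|D|)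
    (by linarith) (cubic_negM A b D) (cubic_bigM A b D)
  exact ⟨r, hr⟩

lemma Fpos (A D r : ℝ) (hAD1 : -2 < A - D) (hAD2 : A - D < 2) :
    0 < 1 + r*(A-D) + r^2 := by
  rcases lt_trichotomy r 0 with h|h|h
  · nlinarith [mul_pos (neg_pos.2 h) (show (0:ℝ) < 2 - (A-D) by linarith), sq_nonneg (r+1)]
  · rw [h]; norm_num
  · nlinarith [mul_pos h (show (0:ℝ) < A - D + 2 by linarith), sq_nonneg (r-1)]

lemma quad_root_abs (p q : ℝ) (hq : q < 1) (h1 : 0 < 1 + p + q) (h2 : 0 < 1 - p + q)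
    (z : ℂ) (hz : z^2 + (p:ℂ)*z + (q:ℂ) = 0) : ‖z‖ < 1 := by
  set x := z.re with hx
  set y := z.im with hy
  have hre : x^2 - y^2 + p*x + q = 0 := by
    have := congrArg Complex.re hz
    simp [pow_two, Complex.add_re, Complex.mul_re, Complex.ofReal_re, Complex.ofReal_im] at this
    nlinarith [this]
  have him : 2*x*y + p*y = 0 := by
    have := congrArg Complex.im hz
    simp [pow_two, Complex.add_im, Complex.mul_im, Complex.ofReal_re, Complex.ofReal_im] at this
    nlinarith [this]
  have hns : x^2 + y^2 < 1 → ‖z‖ < 1 := by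
    intro h
    have h1' : ‖z‖ ^ 2 = x^2 + y^2 := by
      rw [Complex.sq_norm, Complex.normSq_apply, ← hx, ← hy]; ring
    nlinarith [norm_nonneg z]
  apply hns
  rcases eq_or_ne y 0 with hy0 | hy0
  · rw [hy0] at hre ⊢
    have hsq : (x^2+q)^2 = p^2*x^2 := by linear_combination (x^2 + q - p*x) * hre
    have hq2 : (0:ℝ) < 1 - q^2 := by nlinarith [h1, h2, hq]
    nlinarith [hsq, mul_pos h1 h2, hq2, sq_nonneg x]
  · have hp : p = -2*x := by
      rcases mul_eq_zero.mp (show y * (2*x + p) = 0 by linarith [him]) with h | h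
      · exact absurd h hy0
      · linarith
    have : q = x^2 + y^2 := by nlinarith [hre, hp]
    linarith

set_option maxHeartbeats 1000000 in
lemma key_real (A b D r : ℝ) (hD1 : -1 < D) (hD2 : D < 1)
    (hAD1 : -2 < A - D) (hAD2 : A - D < 2)
    (h1 : 0 < 1 + A + b + D) (h2 : 0 < 1 - A + b - D) (h3 : 0 < 1 - b + A*D - D^2)
    (hr : r^3 + A*r^2 + b*r + D = 0) :
    (-1 < r ∧ r < 1) ∧ b + r*A + r^2 < 1 ∧
    0 < 1 + (A+r) + (b + r*A + r^2) ∧ 0 < 1 - (A+r) + (b + r*A + r^2) := by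
  have hrq : r*b + r^2*A + r^3 = -D := by linear_combination hr
  have hFpos : 0 < 1 + r*(A-D) + r^2 := Fpos A D r hAD1 hAD2
  have hid3 : (1 - (b + r*A + r^2)) * (1 + r*(A-D) + r^2) = 1 - b + A*D - D^2 := by
    linear_combination (D - A - r) * hr
  have hq1 : b + r*A + r^2 < 1 := by nlinarith [hid3, h3, hFpos]
  have hid1 : (1-r) * (1 + (A+r) + (b + r*A + r^2)) = 1 + A + b + D := by
    linear_combination -hr
  have hid2 : (1+r) * (1 - (A+r) + (b + r*A + r^2)) = 1 - A + b - D := by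
    linear_combination hr
  have hrlt1 : r < 1 := by
    by_contra hc; push_neg at hc
    have hne : r ≠ 1 := by rintro rfl; nlinarith [hid1, h1]
    have hgt : 1 < r := lt_of_le_of_ne hc (Ne.symm hne)
    have hX : 1 + (A+r) + (b + r*A + r^2) < 0 := by nlinarith [hid1, h1]
    have h4 : r * (1 + (A+r) + (b + r*A + r^2)) < 0 :=
      mul_neg_of_pos_of_neg (by linarith) hX
    have h5 : r + r*A + r^2 - D < 0 := by nlinarith [h4, hrq]
    have hp6 : (0:ℝ) < (r - 1) * (1 + D) := mul_pos (by linarith) (by linarith)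
    nlinarith [hFpos, h5, hp6]
  have hrgt : -1 < r := by
    by_contra hc; push_neg at hc
    have hne : r ≠ -1 := by rintro rfl; nlinarith [hid2, h2]
    have hgt : r < -1 := lt_of_le_of_ne hc hne
    have hY : 1 - (A+r) + (b + r*A + r^2) < 0 := by nlinarith [hid2, h2]
    have h4 : 0 < r * (1 - (A+r) + (b + r*A + r^2)) :=
      mul_pos_of_neg_of_neg (by linarith) hY
    have h5 : 0 < r - r*A - r^2 - D := by nlinarith [h4, hrq]
    have hp6 : (0:ℝ) < (-(1+r)) * (1 - D) := mul_pos (by linarith) (by linarith)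
    nlinarith [hFpos, h5, hp6]
  have hu1 : (0:ℝ) < 1 - r := by linarith
  have hu2 : (0:ℝ) < 1 + r := by linarith
  refine ⟨⟨hrgt, hrlt1⟩, hq1, ?_, ?_⟩
  · nlinarith [hid1, h1, hu1]
  · nlinarith [hid2, h2, hu2]

set_option maxHeartbeats 1000000 in
/-- Under `|D| < 1` and `|A - D| < 2`, the set of parameters `β` for which
`P_β(λ) = λ³ + Aλ² + (B+β)λ + D` is stable is exactly the open interval
`(max{-P₀(1), P₀(-1)}, -D² + AD - B + 1)`: inside the interval all complex roots have
modulus `< 1`, and outside its closure some complex root has modulus `≥ 1`. -/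
theorem stable_interval (A B D : ℝ) (hD : |D| < 1) (hAD : |A - D| < 2) :
    (∀ β ∈ Set.Ioo (max (-(1 + A + B + D)) (-1 + A - B + D)) (-D ^ 2 + A * D - B + 1),
      ∀ z : ℂ, z ^ 3 + (A : ℂ) * z ^ 2 + ((B : ℂ) + (β : ℂ)) * z + (D : ℂ) = 0 →
        ‖z‖ < 1) ∧
    (∀ β : ℝ,
      β ∉ closure (Set.Ioo (max (-(1 + A + B + D)) (-1 + A - B + D))
        (-D ^ 2 + A * D - B + 1)) →
      ∃ z : ℂ, z ^ 3 + (A : ℂ) * z ^ 2 + ((B : ℂ) + (β : ℂ)) * z + (D : ℂ) = 0 ∧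
        1 ≤ ‖z‖) := by
  obtain ⟨hD1, hD2⟩ := abs_lt.mp hD
  obtain ⟨hAD1, hAD2⟩ := abs_lt.mp hAD
  constructor
  · rintro β ⟨hβ1, hβ2⟩ z hz
    obtain ⟨hm1, hm2⟩ := max_lt_iff.mp hβ1
    have h1 : 0 < 1 + A + (B+β) + D := by linarith
    have h2 : 0 < 1 - A + (B+β) - D := by linarith
    have h3 : 0 < 1 - (B+β) + A*D - D^2 := by linarith
    obtain ⟨r, hr⟩ := cubic_root_exists A (B+β) D
    obtain ⟨⟨hrg, hrl⟩, hq1, hP, hQ⟩ := key_real A (B+β) D r hD1 hD2 hAD1 hAD2 h1 h2 h3 hr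
    have hrC : (r:ℂ)^3 + (A:ℂ)*(r:ℂ)^2 + ((B:ℂ)+(β:ℂ))*(r:ℂ) + (D:ℂ) = 0 := by
      exact_mod_cast hr
    have hfact : (z - (r:ℂ)) * (z^2 + ((A + r : ℝ):ℂ)*z + (((B+β) + r*A + r^2 : ℝ):ℂ)) = 0 := by
      push_cast
      linear_combination hz - hrC
    rcases mul_eq_zero.mp hfact with h | h
    · have hz' : z = (r:ℂ) := sub_eq_zero.mp h
      rw [hz', Complex.norm_real, Real.norm_eq_abs]
      exact abs_lt.mpr ⟨hrg, hrl⟩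
    · exact quad_root_abs (A+r) ((B+β) + r*A + r^2) hq1 hP hQ z h
  · intro β hβ
    have hLU : max (-(1 + A + B + D)) (-1 + A - B + D) < -D^2 + A*D - B + 1 := by
      apply max_lt
      · nlinarith [mul_pos (show (0:ℝ) < 1 + D by linarith) (show (0:ℝ) < 2 + A - D by linarith)]
      · nlinarith [mul_pos (show (0:ℝ) < 1 - D by linarith) (show (0:ℝ) < 2 - A + D by linarith)]
    rw [closure_Ioo (ne_of_lt hLU), Set.mem_Icc, not_and_or] at hβ
    push_neg at hβ
    rcases hβ with hβ | hβ
    · rcases lt_max_iff.mp hβ with hc | hc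
      · -- P(1) < 0 : root in [1, M]
        have hf1 : (1:ℝ)^3 + A*1^2 + (B+β)*1 + D ≤ 0 := by norm_num; linarith
        have hM1 : (1:ℝ) ≤ 1 + |A| + |B+β| + |D| := by
          have := abs_nonneg A; have := abs_nonneg (B+β); have := abs_nonneg D; linarith
        obtain ⟨r, hr1, _, hr⟩ := cubic_ivt A (B+β) D 1 (1 + |A| + |B+β| + |D|)
          hM1 hf1 (cubic_bigM A (B+β) D)
        refine ⟨(r:ℂ), by exact_mod_cast hr, ?_⟩
        rw [Complex.norm_real, Real.norm_eq_abs, abs_of_nonneg (by linarith)]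
        exact hr1
      · -- P(-1) > 0 : root in [-M, -1]
        have hf1 : 0 ≤ (-1:ℝ)^3 + A*(-1)^2 + (B+β)*(-1) + D := by norm_num; linarith
        have hM1 : (1:ℝ) ≤ 1 + |A| + |B+β| + |D| := by
          have := abs_nonneg A; have := abs_nonneg (B+β); have := abs_nonneg D; linarith
        obtain ⟨r, _, hr2, hr⟩ := cubic_ivt A (B+β) D (-(1 + |A| + |B+β| + |D|)) (-1)
          (by linarith) (cubic_negM A (B+β) D) hf1
        refine ⟨(r:ℂ), by exact_mod_cast hr, ?_⟩
        rw [Complex.norm_real, Real.norm_eq_abs, abs_of_nonpos (by linarith)]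
        linarith
    · -- β > U
      have h3' : 1 - (B+β) + A*D - D^2 < 0 := by linarith
      by_contra hcon
      push_neg at hcon
      obtain ⟨r, hr⟩ := cubic_root_exists A (B+β) D
      have hrabs : -1 < r ∧ r < 1 := by
        have h := hcon (r:ℂ) (by exact_mod_cast hr)
        rw [Complex.norm_real, Real.norm_eq_abs] at h
        exact abs_lt.mp h
      have hFpos : 0 < 1 + r*(A-D) + r^2 := Fpos A D r hAD1 hAD2
      have hid3 : (1 - ((B+β) + r*A + r^2)) * (1 + r*(A-D) + r^2) = 1 - (B+β) + A*D - D^2 := by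
        linear_combination (D - A - r) * hr
      have hqgt : 1 < (B+β) + r*A + r^2 := by nlinarith [hid3, h3', hFpos]
      have hrC : (r:ℂ)^3 + (A:ℂ)*(r:ℂ)^2 + ((B:ℂ)+(β:ℂ))*(r:ℂ) + (D:ℂ) = 0 := by
        exact_mod_cast hr
      rcases le_or_gt ((A+r)^2 - 4*((B+β) + r*A + r^2)) 0 with hd | hd
      · -- complex (or double) pair
        have hw : (Real.sqrt (4*((B+β) + r*A + r^2) - (A+r)^2))^2
            = 4*((B+β) + r*A + r^2) - (A+r)^2 := Real.sq_sqrt (by linarith)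
        set w := Real.sqrt (4*((B+β) + r*A + r^2) - (A+r)^2) with hwdef
        have hwC : ((w:ℝ):ℂ)^2 = 4*(((B+β) + r*A + r^2 : ℝ):ℂ) - ((A+r : ℝ):ℂ)^2 := by
          exact_mod_cast hw
        push_cast at hwC
        set s : ℂ := ((-(A+r)/2 : ℝ):ℂ) + ((w/2 : ℝ):ℂ) * Complex.I with hsdef
        have hs : s^2 + ((A+r : ℝ):ℂ)*s + (((B+β) + r*A + r^2 : ℝ):ℂ) = 0 := by
          rw [hsdef]
          push_cast
          linear_combination (-(1/4) : ℂ) * hwC + ((w:ℂ)^2/4) * Complex.I_sq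
        have hs3 : s^3 + (A:ℂ)*s^2 + ((B:ℂ)+(β:ℂ))*s + (D:ℂ) = 0 := by
          push_cast at hs hrC ⊢
          linear_combination (s - (r:ℂ)) * hs + hrC
        have habs := hcon s hs3
        have hnq : Complex.normSq s = (B+β) + r*A + r^2 := by
          rw [hsdef]
          simp [Complex.normSq_apply, Complex.add_re, Complex.add_im, Complex.mul_re,
            Complex.mul_im, Complex.I_re, Complex.I_im, Complex.ofReal_re, Complex.ofReal_im]
          nlinarith [hw]
        have : (B+β) + r*A + r^2 < 1 := by
          have h2 := Complex.sq_norm s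
          rw [hnq] at h2
          nlinarith [habs, norm_nonneg s]
        linarith
      · -- two real roots
        have hw : (Real.sqrt ((A+r)^2 - 4*((B+β) + r*A + r^2)))^2
            = (A+r)^2 - 4*((B+β) + r*A + r^2) := Real.sq_sqrt (le_of_lt hd)
        set w := Real.sqrt ((A+r)^2 - 4*((B+β) + r*A + r^2)) with hwdef
        have hq1 : ((-(A+r) + w)/2)^2 + (A+r)*((-(A+r) + w)/2) + ((B+β) + r*A + r^2) = 0 := by
          linear_combination ((1:ℝ)/4) * hw
        have hq2 : ((-(A+r) - w)/2)^2 + (A+r)*((-(A+r) - w)/2) + ((B+β) + r*A + r^2) = 0 := by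
          linear_combination ((1:ℝ)/4) * hw
        have hs1 : ((-(A+r) + w)/2)^3 + A*((-(A+r) + w)/2)^2 + (B+β)*((-(A+r) + w)/2) + D = 0 := by
          linear_combination ((-(A+r) + w)/2 - r) * hq1 + hr
        have hs2 : ((-(A+r) - w)/2)^3 + A*((-(A+r) - w)/2)^2 + (B+β)*((-(A+r) - w)/2) + D = 0 := by
          linear_combination ((-(A+r) - w)/2 - r) * hq2 + hr
        have ha1 : |(-(A+r) + w)/2| < 1 := by
          have h := hcon (((-(A+r) + w)/2 : ℝ):ℂ) (by exact_mod_cast hs1)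
          rwa [Complex.norm_real, Real.norm_eq_abs] at h
        have ha2 : |(-(A+r) - w)/2| < 1 := by
          have h := hcon (((-(A+r) - w)/2 : ℝ):ℂ) (by exact_mod_cast hs2)
          rwa [Complex.norm_real, Real.norm_eq_abs] at h
        obtain ⟨hb1, hb1'⟩ := abs_lt.mp ha1
        obtain ⟨hb2, hb2'⟩ := abs_lt.mp ha2
        have hv : ((-(A+r) + w)/2) * ((-(A+r) - w)/2) = (B+β) + r*A + r^2 := by
          linear_combination (-(1:ℝ)/4) * hw
        have : (B+β) + r*A + r^2 < 1 := by
          nlinarith [hv, mul_pos (show (0:ℝ) < 1 - (-(A+r) + w)/2 by linarith)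
              (show (0:ℝ) < 1 + (-(A+r) - w)/2 by linarith),
            mul_pos (show (0:ℝ) < 1 + (-(A+r) + w)/2 by linarith)
              (show (0:ℝ) < 1 - (-(A+r) - w)/2 by linarith)]
        linarith
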